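/- Let G be a simple graph with vertices u, t. Iteratively define: S₀ = ∅; at step k, if u and t are connected in G minus S_k, pick any u-t path, let w_{k+1} be the neighbour of u on this path closest to t, and set S_{k+1} = S_k ∪ {w_{k+1}}; stop when u and t are disconnected. Then the final set S equals exactly the set of vertices w ∈ N(u) such that some chordless u-t path of G passes through the edge uw. -/

import Mathlib

open SimpleGraph

variable {V : Type*}

/-- `l` is a (simple) path in `G`, given as its list of vertices. -/
def IsPathL (G : SimpleGraph V) (l : List V) : Prop :=
  l.Chain' G.Adj ∧ l.Nodup

/-- `l` is an `s`-`t` path in `G`. -/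
def IsStPathL (G : SimpleGraph V) (s t : V) (l : List V) : Prop :=
  IsPathL G l ∧ l.head? = some s ∧ l.getLast? = some t

/-- No two non-consecutive vertices of `l` are adjacent in `G`. -/
def NoChord (G : SimpleGraph V) (l : List V) : Prop :=
  ∀ (i j : ℕ) (hi : i < l.length) (hj : j < l.length), i + 1 < j →
    ¬ G.Adj (l.get ⟨i, hi⟩) (l.get ⟨j, hj⟩)

/-- `l` is a chordless (induced) `s`-`t` path in `G`. -/
def IsChordlessStPathL (G : SimpleGraph V) (s t : V) (l : List V) : Prop :=
  IsStPathL G s t l ∧ NoChord G l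

/-- `x` is a good neighbour of `vᵢ` (the `i`-th vertex of `l`): some chordless `s`-`t`
path of `G` has `v₀ v₁ … vᵢ x` as a prefix. -/
def GoodNbr (G : SimpleGraph V) (s t : V) (l : List V) (i : ℕ) (x : V) : Prop :=
  ∃ l' : List V, IsChordlessStPathL G s t l' ∧ (l.take (i + 1) ++ [x]) <+: l'

/-- `l` is a cycle in `G`: at least 3 distinct vertices, each cyclically consecutive pair
adjacent. -/
def IsCycleL (G : SimpleGraph V) (l : List V) : Prop :=
  3 ≤ l.length ∧ l.Nodup ∧
    ∀ (i : ℕ) (hi : i < l.length),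
      G.Adj (l.get ⟨i, hi⟩) (l.get ⟨(i + 1) % l.length, Nat.mod_lt _ (by omega)⟩)

/-- `l` is a chordless (induced) cycle in `G`: a cycle such that any two adjacent vertices on
it are cyclically consecutive. -/
def IsChordlessCycleL (G : SimpleGraph V) (l : List V) : Prop :=
  IsCycleL G l ∧
    ∀ (i j : ℕ) (hi : i < l.length) (hj : j < l.length),
      G.Adj (l.get ⟨i, hi⟩) (l.get ⟨j, hj⟩) →
        (i + 1) % l.length = j ∨ (j + 1) % l.length = i

/-- The subgraph of `G` induced by the complement of `R` (vertices of `R` deleted), kept on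
the same vertex type. -/
def delSet (G : SimpleGraph V) (R : Set V) : SimpleGraph V where
  Adj a b := G.Adj a b ∧ a ∉ R ∧ b ∉ R
  symm := ⟨fun _ _ ⟨h, ha, hb⟩ => ⟨h.symm, hb, ha⟩⟩
  loopless := ⟨fun _ ⟨h, _, _⟩ => G.ne_of_adj h rfl⟩

/-- One step of the cleanup procedure for `u` and `t`: if `u` and `t` are still connected in
`G` minus `S`, pick any `u`-`t` path `q` there, let `w` be the neighbour of `u` on `q`
closest to `t`, and add `w` to `S`. -/
def CleanStep (G : SimpleGraph V) (u t : V) (S S' : Set V) : Prop :=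
  ∃ (q : List V) (k : ℕ) (hk : k < q.length),
    IsStPathL (delSet G S) u t q ∧
    (delSet G S).Adj u (q.get ⟨k, hk⟩) ∧
    (∀ (j : ℕ) (hj : j < q.length), k < j → ¬ (delSet G S).Adj u (q.get ⟨j, hj⟩)) ∧
    S' = S ∪ {q.get ⟨k, hk⟩}


section CleanupAux

lemma head_elem {l : List V} {u : V} (h : l.head? = some u) :
    ∃ h0 : 0 < l.length, l[0] = u := by
  cases l with
  | nil => simp at h
  | cons a l => exact ⟨by simp, by simp_all⟩

lemma last_elem {l : List V} {t : V} (h : l.getLast? = some t) :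
    ∃ h0 : 0 < l.length, l[l.length - 1] = t := by
  have hne : l ≠ [] := by rintro rfl; simp at h
  have h0 : 0 < l.length := List.length_pos_iff.mpr hne
  rw [List.getLast?_eq_getElem?, List.getElem?_eq_getElem (by omega)] at h
  exact ⟨h0, by injection h⟩

lemma chain_not_mem {G : SimpleGraph V} {S : Set V} {q : List V}
    (h : q.Chain' (delSet G S).Adj) (h2 : 2 ≤ q.length) : ∀ v ∈ q, v ∉ S := by
  intro v hv
  rw [List.mem_iff_getElem] at hv
  obtain ⟨m, hm, rfl⟩ := hv
  rw [List.Chain', List.isChain_iff_getElem] at h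
  rcases Nat.lt_or_ge m (q.length - 1) with hlt | hge
  · exact (And.right (h m (by omega))).1
  · obtain ⟨m', rfl⟩ : ∃ m', m = m' + 1 := ⟨m - 1, by omega⟩
    have := h m' (by omega)
    simpa using (And.right this).2

lemma shortcut {G : SimpleGraph V} {l : List V} {i j : ℕ} (hi : i < l.length) (hj : j < l.length)
    (hij : i + 1 < j) (hc : l.Chain' G.Adj) (hn : l.Nodup)
    (hadj : G.Adj l[i] l[j]) :
    (l.take (i+1) ++ l.drop j).Chain' G.Adj ∧ (l.take (i+1) ++ l.drop j).Nodup ∧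
    (l.take (i+1) ++ l.drop j).head? = l.head? ∧
    (l.take (i+1) ++ l.drop j).getLast? = l.getLast? ∧
    (l.take (i+1) ++ l.drop j).length < l.length ∧
    ∀ v ∈ (l.take (i+1) ++ l.drop j), v ∈ l := by
  have hlt : (l.take (i+1)).length = i + 1 := by simp; omega
  have hld : (l.drop j).length = l.length - j := by simp
  have htne : l.take (i+1) ≠ [] := by
    intro h; rw [← List.length_eq_zero_iff] at h; omega
  have hdne : l.drop j ≠ [] := by
    intro h; rw [← List.length_eq_zero_iff] at h; omega
  have hlast_take : (l.take (i+1)).getLast? = some l[i] := by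
    rw [List.getLast?_eq_getElem?, hlt, List.getElem?_take]
    simp [List.getElem?_eq_getElem hi]
  have hhead_drop : (l.drop j).head? = some l[j] := by
    rw [List.head?_eq_getElem?, List.getElem?_drop]
    simp [List.getElem?_eq_getElem hj]
  refine ⟨?_, ?_, ?_, ?_, ?_, ?_⟩
  · rw [List.Chain', List.isChain_append]
    refine ⟨hc.infix (List.take_prefix _ _).isInfix,
      hc.infix (List.drop_suffix _ _).isInfix, ?_⟩
    intro x hx y hy
    rw [hlast_take, Option.mem_some_iff] at hx
    rw [hhead_drop, Option.mem_some_iff] at hy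
    rw [← hx, ← hy]; exact hadj
  · have hsub : List.Sublist (l.take (i+1) ++ l.drop j) (l.take (i+1) ++ l.drop (i+1)) := by
      apply List.Sublist.append_left
      have : l.drop j = (l.drop (i+1)).drop (j - (i+1)) := by
        rw [List.drop_drop]; congr 1; omega
      rw [this]; exact List.drop_sublist _ _
    exact hn.sublist (by rwa [List.take_append_drop] at hsub)
  · rw [List.head?_append_of_ne_nil _ htne]
    cases l with
    | nil => simp at hi
    | cons a l => simp [List.take_cons]
  · rw [List.getLast?_append_of_ne_nil _ hdne, List.getLast?_eq_getElem?,
      List.getLast?_eq_getElem?, hld, List.getElem?_drop]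
    congr 1; omega
  · rw [List.length_append, hlt, hld]; omega
  · intro v hv
    rcases List.mem_append.mp hv with h | h
    · exact List.take_subset _ _ h
    · exact List.drop_subset _ _ h

lemma exists_chordless (G : SimpleGraph V) (u t : V) (A : Set V) :
    ∀ n (l₀ : List V), l₀.length = n → IsStPathL G u t l₀ → (∀ v ∈ l₀, v ∈ A) →
    ∃ l, IsStPathL G u t l ∧ (∀ v ∈ l, v ∈ A) ∧ NoChord G l := by
  intro n
  induction n using Nat.strong_induction_on with
  | _ n ih =>
    intro l₀ hlen hp hA
    by_cases hnc : NoChord G l₀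
    · exact ⟨l₀, hp, hA, hnc⟩
    · simp only [NoChord, not_forall, not_not] at hnc
      obtain ⟨i, j, hi, hj, hij, hadj⟩ := hnc
      have hp' : (l₀.Chain' G.Adj ∧ l₀.Nodup) ∧ l₀.head? = some u ∧ l₀.getLast? = some t := hp
      obtain ⟨⟨hc, hn⟩, hh, hl⟩ := hp'
      simp only [List.get_eq_getElem] at hadj
      obtain ⟨hc', hn', hh', hl', hlen', hsub'⟩ := shortcut hi hj hij hc hn hadj
      exact ih _ (by omega) _ rfl ⟨⟨hc', hn'⟩, hh'.trans hh, hl'.trans hl⟩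
        (fun v hv => hA v (hsub' v hv))

lemma run_sub {G : SimpleGraph V} {u t : V} {S : Set V}
    (hrun : Relation.ReflTransGen (CleanStep G u t) ∅ S) :
    ∀ w ∈ S, G.Adj u w ∧ ∃ l : List V, IsChordlessStPathL G u t l ∧
      ∃ h : 1 < l.length, l.get ⟨1, h⟩ = w := by
  induction hrun with
  | refl => intro w hw; exact absurd hw (Set.notMem_empty w)
  | tail hab hbc ih =>
    rename_i b c
    obtain ⟨q, k, hk, hpath, hadjk, hmax, hS'⟩ := hbc
    have hub : u ∉ b := fun h => G.loopless.irrefl u ((ih u h).1)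
    have hpath' : (q.Chain' (delSet G b).Adj ∧ q.Nodup) ∧
        q.head? = some u ∧ q.getLast? = some t := hpath
    obtain ⟨⟨hc, hn⟩, hh, hl⟩ := hpath'
    obtain ⟨h0, hq0⟩ := head_elem hh
    obtain ⟨hq1, hqlast⟩ := last_elem hl
    have hadjG : G.Adj u (q.get ⟨k, hk⟩) := And.left hadjk
    have hwE : q.get ⟨k, hk⟩ = q[k] := rfl
    have hk0 : k ≠ 0 := by
      rintro rfl
      exact G.loopless.irrefl u (by rwa [hwE, hq0] at hadjG)
    have h2 : 2 ≤ q.length := by omega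
    have hnotb : ∀ v ∈ q, v ∉ b := chain_not_mem hc h2
    have hut : u ≠ t := by
      rintro rfl
      have : (0 : ℕ) = q.length - 1 :=
        hn.getElem_inj_iff.mp (by rw [hq0, hqlast])
      omega
    -- the candidate path
    have hdl : (q.drop k).length = q.length - k := by simp
    have hdne : q.drop k ≠ [] := by
      intro h; rw [← List.length_eq_zero_iff] at h; omega
    have hhead_drop : (q.drop k).head? = some q[k] := by
      rw [List.head?_eq_getElem?, List.getElem?_drop]
      simp [List.getElem?_eq_getElem hk]
    have hcd : (q.drop k).Chain' G.Adj :=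
      (hc.infix (List.drop_suffix k q).isInfix).imp (fun a b h => And.left h)
    have hundrop : u ∉ q.drop k := by
      intro hmem
      rw [List.mem_iff_getElem] at hmem
      obtain ⟨m, hm, hqm⟩ := hmem
      rw [List.getElem_drop] at hqm
      have : k + m = 0 := hn.getElem_inj_iff.mp (by rw [hqm, hq0])
      omega
    have hc0 : (u :: q.drop k).Chain' G.Adj := by
      rw [List.Chain', List.isChain_cons]
      refine ⟨fun y hy => ?_, hcd⟩
      rw [hhead_drop, Option.mem_some_iff] at hy
      rw [← hy]; rwa [hwE] at hadjG
    have hn0 : (u :: q.drop k).Nodup :=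
      List.nodup_cons.mpr ⟨hundrop, hn.sublist (List.drop_sublist _ _)⟩
    have hl0 : (u :: q.drop k).getLast? = some t := by
      have : (u :: q.drop k) = [u] ++ q.drop k := rfl
      rw [this, List.getLast?_append_of_ne_nil _ hdne, List.getLast?_eq_getElem?, hdl,
        List.getElem?_drop]
      rw [List.getLast?_eq_getElem?] at hl
      rw [← hl]; congr 1; omega
    have hsub0 : ∀ v ∈ u :: q.drop k, v = u ∨ v ∈ q.drop k := by
      intro v hv; simpa using hv
    obtain ⟨l, hlp, hlA, hlnc⟩ := exists_chordless G u t {v | v = u ∨ v ∈ q.drop k}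
      (u :: q.drop k).length (u :: q.drop k) rfl ⟨⟨hc0, hn0⟩, rfl, hl0⟩ hsub0
    have hlp' : (l.Chain' G.Adj ∧ l.Nodup) ∧ l.head? = some u ∧ l.getLast? = some t := hlp
    obtain ⟨⟨lc, ln⟩, lh, ll⟩ := hlp'
    obtain ⟨l0pos, hl0u⟩ := head_elem lh
    obtain ⟨hll1, hllast⟩ := last_elem ll
    have hllen : 1 < l.length := by
      by_contra h
      have h1 : l.length = 1 := by omega
      exact hut (by rw [← hl0u, ← hllast]; congr 1; omega)
    -- l[1] = q[k]
    have hadj01 : G.Adj l[0] l[1] := by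
      rw [List.Chain', List.isChain_iff_getElem] at lc
      have := lc 0 (by omega)
      simpa using this
    have hl1 : l[1] = q[k] := by
      have hmem : l[1] ∈ ({v | v = u ∨ v ∈ q.drop k} : Set V) :=
        hlA _ (List.getElem_mem _)
      rcases hmem with h | h
      · exfalso
        have : (1 : ℕ) = 0 := ln.getElem_inj_iff.mp (by rw [h, hl0u])
        omega
      · rw [List.mem_iff_getElem] at h
        obtain ⟨m, hm, hqm⟩ := h
        rw [List.getElem_drop] at hqm
        rcases Nat.eq_zero_or_pos m with rfl | hmpos
        · rw [← hqm]; congr 1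
        · exfalso
          have hkm : k + m < q.length := by
            rw [hdl] at hm; omega
          refine hmax (k + m) hkm (by omega) (And.intro ?_ ⟨hub, hnotb _ (List.getElem_mem _)⟩)
          show G.Adj u q[k + m]
          rw [hqm, ← hl0u]; exact hadj01
    intro w' hw'
    rw [hS'] at hw'
    rcases hw' with hw' | hw'
    · exact ih w' hw'
    · rw [Set.mem_singleton_iff] at hw'
      subst hw'
      refine ⟨hadjG, l, ⟨hlp, hlnc⟩, hllen, ?_⟩
      rw [List.get_eq_getElem, hwE, ← hl1]

end CleanupAux

/-- Correctness of the cleanup operation: if starting from `∅` the cleanup steps produce a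
set `S` such that `u` and `t` are disconnected in `G` minus `S`, then `S` is exactly the set
of neighbours `w` of `u` such that some chordless `u`-`t` path of `G` passes through the
edge `uw`. -/
theorem stmt12 (G : SimpleGraph V) (u t : V) (S : Set V)
    (hrun : Relation.ReflTransGen (CleanStep G u t) ∅ S)
    (hstop : ¬ ∃ q : List V, IsStPathL (delSet G S) u t q) :
    S = {w | G.Adj u w ∧ ∃ l : List V, IsChordlessStPathL G u t l ∧
          ∃ h : 1 < l.length, l.get ⟨1, h⟩ = w} := by
  have hsub := run_sub hrun
  have huS : u ∉ S := fun h => G.loopless.irrefl u ((hsub u h).1)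
  ext w
  simp only [Set.mem_setOf_eq]
  constructor
  · exact hsub w
  · rintro ⟨hadj, l, ⟨hlp, hnc⟩, hlen, hget⟩
    have hlp' : (l.Chain' G.Adj ∧ l.Nodup) ∧ l.head? = some u ∧ l.getLast? = some t := hlp
    obtain ⟨⟨lc, ln⟩, lh, ll⟩ := hlp'
    obtain ⟨l0pos, hl0u⟩ := head_elem lh
    rw [List.get_eq_getElem] at hget
    by_contra hw
    apply hstop
    have hnotS : ∀ m (hm : m < l.length), l[m] ∉ S := by
      intro m hm hmS
      match m with
      | 0 => exact huS (hl0u ▸ hmS)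
      | 1 => exact hw (hget ▸ hmS)
      | (m+2) =>
        have := hnc 0 (m+2) (by omega) hm (by omega)
        simp only [List.get_eq_getElem] at this
        exact this (hl0u ▸ (hsub _ hmS).1)
    refine ⟨l, ⟨⟨?_, ln⟩, lh, ll⟩⟩
    rw [List.Chain', List.isChain_iff_getElem]
    intro i hi
    rw [List.Chain', List.isChain_iff_getElem] at lc
    exact And.intro (lc i hi) ⟨hnotS i (by omega), hnotS (i+1) (by omega)⟩
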